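/- For every n ≥ 3 and every λ ∈ [-1, 1], there exists an n×n symmetric pentadiagonal doubly stochastic matrix having λ as an eigenvalue. -/
import Mathlib


open Matrix

/-- An `n × n` real matrix is doubly stochastic if it is entrywise non-negative
and every row sum and column sum equals 1. -/
def IsDoublyStochastic {n : ℕ} (A : Matrix (Fin n) (Fin n) ℝ) : Prop :=
  (∀ i j, 0 ≤ A i j) ∧ (∀ i, ∑ j, A i j = 1) ∧ (∀ j, ∑ i, A i j = 1)

/-- A matrix is pentadiagonal if `A i j = 0` whenever `|i - j| ≥ 3`. -/
def IsPentadiagonal {n : ℕ} (A : Matrix (Fin n) (Fin n) ℝ) : Prop :=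
  ∀ i j : Fin n, 3 ≤ |(i : ℤ) - (j : ℤ)| → A i j = 0

/-- First superdiagonal entries `b_k = A (k, k+1)` in the 1-based indexing of the paper,
with the convention that out-of-range indices give `0`. -/
def bEnt {n : ℕ} (A : Matrix (Fin n) (Fin n) ℝ) (k : ℕ) : ℝ :=
  if h : 1 ≤ k ∧ k < n then A ⟨k - 1, by omega⟩ ⟨k, h.2⟩ else 0

/-- Second superdiagonal entries `c_k = A (k, k+2)` in the 1-based indexing of the paper,
with the convention that out-of-range indices give `0`. -/
def cEnt {n : ℕ} (A : Matrix (Fin n) (Fin n) ℝ) (k : ℕ) : ℝ :=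
  if h : 1 ≤ k ∧ k + 1 < n then A ⟨k - 1, by omega⟩ ⟨k + 1, h.2⟩ else 0

/-- For every `n ≥ 3` and every `λ ∈ [-1,1]` there is an `n × n` symmetric pentadiagonal
doubly stochastic matrix having `λ` as an eigenvalue. -/
theorem exists_pentadiagonal_doublyStochastic_with_eigenvalue (n : ℕ) (hn : 3 ≤ n)
    (μ : ℝ) (hμ : μ ∈ Set.Icc (-1 : ℝ) 1) :
    ∃ A : Matrix (Fin n) (Fin n) ℝ, Aᵀ = A ∧ IsDoublyStochastic A ∧ IsPentadiagonal A ∧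
      ∃ v : Fin n → ℝ, v ≠ 0 ∧ A.mulVec v = μ • v := by
  obtain ⟨h1, h2⟩ := hμ
  set a : ℝ := (1 + μ) / 2 with ha
  have ha0 : 0 ≤ a := by rw [ha]; linarith
  have ha1 : a ≤ 1 := by rw [ha]; linarith
  have hn0 : (0 : ℕ) < n := by omega
  have hn1 : (1 : ℕ) < n := by omega
  set i0 : Fin n := ⟨0, hn0⟩ with hi0
  set i1 : Fin n := ⟨1, hn1⟩ with hi1
  have hne : i0 ≠ i1 := by simp [hi0, hi1, Fin.ext_iff]
  set σ : Equiv.Perm (Fin n) := Equiv.swap i0 i1 with hσ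
  have hσσ : ∀ i j : Fin n, σ i = j ↔ σ j = i := by
    intro i j
    constructor <;> intro h <;> rw [← h, hσ, Equiv.swap_apply_self]
  set A : Matrix (Fin n) (Fin n) ℝ :=
    fun i j => a * (if i = j then 1 else 0) + (1 - a) * (if σ i = j then 1 else 0) with hA
  have hAentry : ∀ i j, A i j =
      a * (if i = j then 1 else 0) + (1 - a) * (if σ i = j then 1 else 0) := fun i j => rfl
  have hσ0 : σ i0 = i1 := Equiv.swap_apply_left i0 i1
  have hσ1 : σ i1 = i0 := Equiv.swap_apply_right i0 i1
  have hσother : ∀ i : Fin n, i ≠ i0 → i ≠ i1 → σ i = i := fun i h h' =>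
    Equiv.swap_apply_of_ne_of_ne h h'
  refine ⟨A, ?_, ⟨?_, ?_, ?_⟩, ?_, ?_⟩
  · ext i j
    rw [transpose_apply, hAentry, hAentry]
    simp only [hσσ j i]
    simp [eq_comm]
  · intro i j
    rw [hAentry]
    split_ifs <;> linarith
  · intro i
    simp only [hAentry, Finset.sum_add_distrib, ← Finset.mul_sum, Finset.sum_ite_eq,
      Finset.mem_univ, if_true]
    ring
  · intro j
    have : ∀ i : Fin n, A i j =
        a * (if i = j then 1 else 0) + (1 - a) * (if i = σ j then 1 else 0) := by
      intro i
      rw [hAentry]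
      congr 2
      simp [hσσ i j, eq_comm]
    simp only [this, Finset.sum_add_distrib, ← Finset.mul_sum, Finset.sum_ite_eq',
      Finset.mem_univ, if_true]
    ring
  · intro i j hij
    have hij' : i ≠ j := by
      intro h; rw [h] at hij; simp at hij
    have hσij : σ i ≠ j := by
      intro h
      by_cases h0 : i = i0
      · rw [h0, hσ0] at h
        rw [h0, ← h] at hij
        simp [hi0, hi1] at hij
      · by_cases h1 : i = i1
        · rw [h1, hσ1] at h
          rw [h1, ← h] at hij
          simp [hi0, hi1] at hij
        · exact hij' (hσother i h0 h1 ▸ h)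
    rw [hAentry, if_neg hij', if_neg hσij]
    ring
  · refine ⟨fun k => if k = i0 then 1 else if k = i1 then -1 else 0, ?_, ?_⟩
    · intro h
      have := congrFun h i0
      simp at this
    · funext i
      have key : ∀ j : Fin n, A i j * (if j = i0 then (1:ℝ) else if j = i1 then -1 else 0)
          = (if i0 = j then A i j else 0) + (if i1 = j then -(A i j) else 0) := by
        intro j
        by_cases h0 : j = i0
        · rw [h0]; simp [hne, Ne.symm hne]
        · by_cases h1 : j = i1
          · rw [h1]; simp [hne, Ne.symm hne]
          · simp [h0, h1, Ne.symm h0, Ne.symm h1]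
      rw [mulVec, dotProduct]
      rw [Finset.sum_congr rfl fun j _ => key j]
      rw [Finset.sum_add_distrib, Finset.sum_ite_eq, Finset.sum_ite_eq]
      simp only [Finset.mem_univ, if_true, Pi.smul_apply, smul_eq_mul]
      by_cases h0 : i = i0
      · rw [h0, hAentry, hAentry, if_pos rfl, if_neg hne, hσ0, if_neg (Ne.symm hne), if_pos rfl]
        simp [ha]; ring
      · by_cases h1 : i = i1
        · rw [h1, hAentry, hAentry, if_neg (Ne.symm hne), if_pos rfl, hσ1,
            if_pos rfl, if_neg hne]
          simp [h1, hne, Ne.symm hne, ha]; ring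
        · rw [hAentry, hAentry, if_neg h0, if_neg h1, hσother i h0 h1, if_neg h0, if_neg h1]
          simp [h0, h1]
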